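/- Consider the rewriting system ℜ'' for the figure-eight knot group on the alphabet {s₀, s₄, s₅, t₁, t₂, t₃} and formal inverses, with rules: t₂ → t₁⁻¹s₄; t₃ → t₂⁻¹s₅; t₁ → t₃⁻¹s₅; s₄t₁⁻¹ → t₁⁻¹s₄s₅⁻¹; s₄t₂⁻¹ → t₃⁻¹s₅; s₅t₃⁻¹ → t₁⁻¹s₄; s₅t₁⁻¹ → t₂⁻¹s₅; s₄⁻¹t₁⁻¹ → t₁⁻¹s₅s₄⁻¹; t₂⁻¹t₁⁻¹ → s₄⁻¹; t₃⁻¹t₂⁻¹ → s₅⁻¹; t₁⁻¹t₃⁻¹ → s₅⁻¹; s₅t₂⁻¹ → t₃⁻¹s₅s₄⁻¹; s₄⁻¹t₃⁻¹ → t₂⁻¹s₅⁻¹; s₅⁻¹t₂⁻¹ → t₁⁻¹s₅⁻¹; s₅⁻¹t₁⁻¹ → t₃⁻¹s₄⁻¹; s₅⁻¹t₃⁻¹ → t₂⁻¹s₄s₅⁻¹; together with all free-cancellation rules aā → ε and āa → ε. This rewriting system is terminating. -/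

import Mathlib

/-- The alphabet of the rewriting system ℜ'' for the figure-eight knot group:
the generators s₀, s₄, s₅, t₁, t₂, t₃ and their formal inverses. -/
inductive L8 where
  | s0 | s4 | s5 | t1 | t2 | t3 | is0 | is4 | is5 | it1 | it2 | it3
deriving DecidableEq

open L8

/-- Formal inversion on the alphabet. -/
def inv8 : L8 → L8
  | s0 => is0 | is0 => s0 | s4 => is4 | is4 => s4 | s5 => is5 | is5 => s5
  | t1 => it1 | it1 => t1 | t2 => it2 | it2 => t2 | t3 => it3 | it3 => t3

/-- The rules of ℜ'' for the figure-eight knot group, together with all free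
cancellation rules. -/
def R8 : Set (List L8 × List L8) :=
  {([t2], [it1, s4]), ([t3], [it2, s5]), ([t1], [it3, s5]),
   ([s4, it1], [it1, s4, is5]),
   ([s4, it2], [it3, s5]), ([s5, it3], [it1, s4]), ([s5, it1], [it2, s5]),
   ([is4, it1], [it1, s5, is4]),
   ([it2, it1], [is4]), ([it3, it2], [is5]), ([it1, it3], [is5]),
   ([s5, it2], [it3, s5, is4]),
   ([is4, it3], [it2, is5]), ([is5, it2], [it1, is5]), ([is5, it1], [it3, is4]),
   ([is5, it3], [it2, s4, is5])} ∪
  {p | ∃ a : L8, p = ([a, inv8 a], ([] : List L8))} ∪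
  {p | ∃ a : L8, p = ([inv8 a, a], ([] : List L8))}

/-! ### Auxiliary measure -/

/-- Is the letter one of `t1, t2, t3`? -/
def isT : L8 → Bool
  | t1 => true | t2 => true | t3 => true | _ => false

/-- Is the letter one of `it1, it2, it3`? -/
def isIT : L8 → Bool
  | it1 => true | it2 => true | it3 => true | _ => false

/-- Is the letter an `s`-type letter? -/
def isS : L8 → Bool
  | s0 => true | s4 => true | s5 => true
  | is0 => true | is4 => true | is5 => true | _ => false

/-- Number of `t`-letters. -/
def tc (w : List L8) : ℕ := w.countP isT

/-- Number of `it`-letters. -/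
def ic (w : List L8) : ℕ := w.countP isIT

/-- Each `s`-letter contributes `3 ^ (number of it-letters to its right)`. -/
def ms : List L8 → ℕ
  | [] => 0
  | a :: w => (if isS a then 3 ^ ic w else 0) + ms w

lemma tc_append (u v : List L8) : tc (u ++ v) = tc u + tc v :=
  List.countP_append

lemma ic_append (u v : List L8) : ic (u ++ v) = ic u + ic v :=
  List.countP_append

lemma ms_append (u v : List L8) : ms (u ++ v) = ms u * 3 ^ ic v + ms v := by
  induction u with
  | nil => simp [ms]
  | cons a u ih =>
    show (if isS a then 3 ^ ic (u ++ v) else 0) + ms (u ++ v)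
        = ((if isS a then 3 ^ ic u else 0) + ms u) * 3 ^ ic v + ms v
    rw [ih, ic_append, pow_add]
    cases isS a <;> simp [add_mul] <;> ring

/-- The key property of a rule: the measure of the left side dominates that of
the right side lexicographically. -/
def good (l r : List L8) : Prop :=
  tc r < tc l ∨ (tc r = tc l ∧ (ic r < ic l ∨ (ic r = ic l ∧ ms r < ms l)))

instance (l r : List L8) : Decidable (good l r) := by unfold good; infer_instance

lemma R8_good {l r : List L8} (h : (l, r) ∈ R8) : good l r := by
  rcases h with (h | ⟨a, ha⟩) | ⟨a, ha⟩
  · simp only [Set.mem_insert_iff, Set.mem_singleton_iff, Prod.mk.injEq] at h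
    rcases h with ⟨rfl, rfl⟩ | ⟨rfl, rfl⟩ | ⟨rfl, rfl⟩ | ⟨rfl, rfl⟩ | ⟨rfl, rfl⟩ |
      ⟨rfl, rfl⟩ | ⟨rfl, rfl⟩ | ⟨rfl, rfl⟩ | ⟨rfl, rfl⟩ | ⟨rfl, rfl⟩ | ⟨rfl, rfl⟩ |
      ⟨rfl, rfl⟩ | ⟨rfl, rfl⟩ | ⟨rfl, rfl⟩ | ⟨rfl, rfl⟩ | ⟨rfl, rfl⟩ <;> decide
  · rw [Prod.mk.injEq] at ha
    obtain ⟨rfl, rfl⟩ := ha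
    cases a <;> decide
  · rw [Prod.mk.injEq] at ha
    obtain ⟨rfl, rfl⟩ := ha
    cases a <;> decide

/-- The lexicographic measure. -/
def M (w : List L8) : ℕ × ℕ × ℕ := (tc w, ic w, ms w)

/-- The lexicographic order on triples of naturals. -/
def LexLt : ℕ × ℕ × ℕ → ℕ × ℕ × ℕ → Prop :=
  Prod.Lex (· < ·) (Prod.Lex (· < ·) (· < ·))

lemma lexLt_wf : WellFounded LexLt :=
  WellFounded.prod_lex (Nat.lt_wfRel.wf) (WellFounded.prod_lex (Nat.lt_wfRel.wf) (Nat.lt_wfRel.wf))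

lemma M_decrease (u v l r : List L8) (h : good l r) :
    LexLt (M (u ++ r ++ v)) (M (u ++ l ++ v)) := by
  unfold LexLt M
  rw [Prod.lex_def]
  simp only [tc_append, ic_append, ms_append]
  rcases h with h | ⟨h1, h | ⟨h2, h3⟩⟩
  · left; omega
  · right
    constructor
    · omega
    · rw [Prod.lex_def]
      left; omega
  · right
    refine ⟨by omega, ?_⟩
    rw [Prod.lex_def]
    right
    refine ⟨by omega, ?_⟩
    simp only [h2, add_mul]
    have h4 : ms r * 3 ^ ic v < ms l * 3 ^ ic v :=
      Nat.mul_lt_mul_of_lt_of_le h3 le_rfl (Nat.pow_pos (by norm_num))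
    omega

/-- The rewriting system ℜ'' for the figure-eight knot group is terminating. -/
theorem stmt_12 :
    ¬ ∃ f : ℕ → List L8, ∀ n, ∃ u v l r,
      (l, r) ∈ R8 ∧ f n = u ++ l ++ v ∧ f (n + 1) = u ++ r ++ v := by
  rintro ⟨f, hf⟩
  have hd : ∀ n, LexLt (M (f (n + 1))) (M (f n)) := by
    intro n
    obtain ⟨u, v, l, r, hR, h1, h2⟩ := hf n
    rw [h1, h2]
    exact M_decrease u v l r (R8_good hR)
  -- a minimal element of the range of `M ∘ f` gives a contradiction
  obtain ⟨x, ⟨n, rfl⟩, hmin⟩ :=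
    lexLt_wf.has_min (Set.range fun n => M (f n)) ⟨M (f 0), ⟨0, rfl⟩⟩
  exact hmin (M (f (n + 1))) ⟨n + 1, rfl⟩ (hd n)
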